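/- Let F be a finite field with q elements. In SL₂(F), the three subgroups H₁ = {[[1, x], [0, 1]] : x ∈ F}, H₂ = {[[1, 0], [y, 1]] : y ∈ F}, and H₃ = {[[1+z, z], [−z, 1−z]] : z ∈ F} each have order q and satisfy the triple product property. Consequently, SL₂(F_q), a group of order q³ − q, realizes ⟨q, q, q⟩. -/

import Mathlib

/-- The right quotient set `Q(S) = {s₁s₂⁻¹ : s₁, s₂ ∈ S}` of a subset of a group. -/
def rightQuotient {G : Type*} [Group G] (S : Set G) : Set G :=
  {g | ∃ s₁ ∈ S, ∃ s₂ ∈ S, g = s₁ * s₂⁻¹}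

/-- Subsets `S₁, S₂, S₃` of a group satisfy the triple product property if whenever
`qᵢ ∈ Q(Sᵢ)` and `q₁q₂q₃ = 1`, we have `q₁ = q₂ = q₃ = 1`. -/
def TPP {G : Type*} [Group G] (S₁ S₂ S₃ : Set G) : Prop :=
  ∀ q₁ ∈ rightQuotient S₁, ∀ q₂ ∈ rightQuotient S₂, ∀ q₃ ∈ rightQuotient S₃,
    q₁ * q₂ * q₃ = 1 → q₁ = 1 ∧ q₂ = 1 ∧ q₃ = 1

/-- A group `G` realizes `⟨n₁, n₂, n₃⟩` if there are finite subsets `Sᵢ ⊆ G` with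
`|Sᵢ| = nᵢ` satisfying the triple product property. -/
def Realizes (G : Type*) [Group G] (n₁ n₂ n₃ : ℕ) : Prop :=
  ∃ S₁ S₂ S₃ : Set G, S₁.Finite ∧ S₂.Finite ∧ S₃.Finite ∧
    S₁.ncard = n₁ ∧ S₂.ncard = n₂ ∧ S₃.ncard = n₃ ∧ TPP S₁ S₂ S₃

/-- The subgroup (as a set) of upper unitriangular matrices in `SL₂(F)`. -/
def sl2H₁ (F : Type*) [Field F] : Set (Matrix.SpecialLinearGroup (Fin 2) F) :=
  {M | ∃ x : F, (M : Matrix (Fin 2) (Fin 2) F) = !![1, x; 0, 1]}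

/-- The subgroup (as a set) of lower unitriangular matrices in `SL₂(F)`. -/
def sl2H₂ (F : Type*) [Field F] : Set (Matrix.SpecialLinearGroup (Fin 2) F) :=
  {M | ∃ y : F, (M : Matrix (Fin 2) (Fin 2) F) = !![1, 0; y, 1]}

/-- The third subgroup (as a set) `{[[1+z, z], [−z, 1−z]] : z ∈ F}` in `SL₂(F)`. -/
def sl2H₃ (F : Type*) [Field F] : Set (Matrix.SpecialLinearGroup (Fin 2) F) :=
  {M | ∃ z : F, (M : Matrix (Fin 2) (Fin 2) F) = !![1 + z, z; -z, 1 - z]}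

namespace SL2TPP
open Matrix
variable {F : Type*} [Field F]

abbrev SL2 (F : Type*) [Field F] := Matrix.SpecialLinearGroup (Fin 2) F

def f₁ (x : F) : SL2 F := ⟨!![1, x; 0, 1], by simp [Matrix.det_fin_two_of]⟩
def f₂ (y : F) : SL2 F := ⟨!![1, 0; y, 1], by simp [Matrix.det_fin_two_of]⟩
def f₃ (z : F) : SL2 F := ⟨!![1 + z, z; -z, 1 - z], by simp [Matrix.det_fin_two_of]; ring⟩

lemma f₁_mul (x y : F) : f₁ x * f₁ y = f₁ (x + y) := by
  apply Subtype.ext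
  rw [Matrix.SpecialLinearGroup.coe_mul]
  simp only [f₁, Matrix.mul_fin_two]
  congr 1 <;> ring

lemma f₂_mul (x y : F) : f₂ x * f₂ y = f₂ (x + y) := by
  apply Subtype.ext
  rw [Matrix.SpecialLinearGroup.coe_mul]
  simp only [f₂, Matrix.mul_fin_two]
  congr 1 <;> ring

lemma f₃_mul (x y : F) : f₃ x * f₃ y = f₃ (x + y) := by
  apply Subtype.ext
  rw [Matrix.SpecialLinearGroup.coe_mul]
  simp only [f₃, Matrix.mul_fin_two]
  congr 1 <;> ring

lemma f₁_zero : f₁ (0 : F) = 1 := by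
  apply Subtype.ext; simp [f₁, Matrix.one_fin_two]

lemma f₂_zero : f₂ (0 : F) = 1 := by
  apply Subtype.ext; simp [f₂, Matrix.one_fin_two]

lemma f₃_zero : f₃ (0 : F) = 1 := by
  apply Subtype.ext; simp [f₃, Matrix.one_fin_two]

lemma f₁_inv (x : F) : (f₁ x)⁻¹ = f₁ (-x) := by
  symm; apply eq_inv_of_mul_eq_one_left; rw [f₁_mul]; simp [f₁_zero]

lemma f₂_inv (x : F) : (f₂ x)⁻¹ = f₂ (-x) := by
  symm; apply eq_inv_of_mul_eq_one_left; rw [f₂_mul]; simp [f₂_zero]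

lemma f₃_inv (x : F) : (f₃ x)⁻¹ = f₃ (-x) := by
  symm; apply eq_inv_of_mul_eq_one_left; rw [f₃_mul]; simp [f₃_zero]

lemma sl2H₁_eq : sl2H₁ F = Set.range f₁ := by
  ext M
  constructor
  · rintro ⟨x, hx⟩; exact ⟨x, (Subtype.ext hx.symm : f₁ x = M)⟩
  · rintro ⟨x, rfl⟩; exact ⟨x, rfl⟩

lemma sl2H₂_eq : sl2H₂ F = Set.range f₂ := by
  ext M
  constructor
  · rintro ⟨x, hx⟩; exact ⟨x, (Subtype.ext hx.symm : f₂ x = M)⟩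
  · rintro ⟨x, rfl⟩; exact ⟨x, rfl⟩

lemma sl2H₃_eq : sl2H₃ F = Set.range f₃ := by
  ext M
  constructor
  · rintro ⟨x, hx⟩; exact ⟨x, (Subtype.ext hx.symm : f₃ x = M)⟩
  · rintro ⟨x, rfl⟩; exact ⟨x, rfl⟩

lemma f₁_injective : Function.Injective (f₁ : F → SL2 F) := by
  intro a b h
  have := congrArg (fun M : SL2 F => (M : Matrix (Fin 2) (Fin 2) F) 0 1) h
  simpa [f₁] using this

lemma f₂_injective : Function.Injective (f₂ : F → SL2 F) := by
  intro a b h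
  have := congrArg (fun M : SL2 F => (M : Matrix (Fin 2) (Fin 2) F) 1 0) h
  simpa [f₂] using this

lemma f₃_injective : Function.Injective (f₃ : F → SL2 F) := by
  intro a b h
  have := congrArg (fun M : SL2 F => (M : Matrix (Fin 2) (Fin 2) F) 0 1) h
  simpa [f₃] using this

lemma ncard_range_f₁ : (sl2H₁ F).ncard = Nat.card F := by
  rw [sl2H₁_eq, ← Nat.card_coe_set_eq]
  exact Nat.card_congr (Equiv.ofInjective _ f₁_injective).symm

lemma ncard_range_f₂ : (sl2H₂ F).ncard = Nat.card F := by
  rw [sl2H₂_eq, ← Nat.card_coe_set_eq]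
  exact Nat.card_congr (Equiv.ofInjective _ f₂_injective).symm

lemma ncard_range_f₃ : (sl2H₃ F).ncard = Nat.card F := by
  rw [sl2H₃_eq, ← Nat.card_coe_set_eq]
  exact Nat.card_congr (Equiv.ofInjective _ f₃_injective).symm

lemma rq₁ {g : SL2 F} (h : g ∈ rightQuotient (sl2H₁ F)) : ∃ x : F, g = f₁ x := by
  rw [sl2H₁_eq] at h
  obtain ⟨_, ⟨a, rfl⟩, _, ⟨b, rfl⟩, rfl⟩ := h
  exact ⟨a + -b, by rw [f₁_inv, f₁_mul]⟩

lemma rq₂ {g : SL2 F} (h : g ∈ rightQuotient (sl2H₂ F)) : ∃ x : F, g = f₂ x := by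
  rw [sl2H₂_eq] at h
  obtain ⟨_, ⟨a, rfl⟩, _, ⟨b, rfl⟩, rfl⟩ := h
  exact ⟨a + -b, by rw [f₂_inv, f₂_mul]⟩

lemma rq₃ {g : SL2 F} (h : g ∈ rightQuotient (sl2H₃ F)) : ∃ x : F, g = f₃ x := by
  rw [sl2H₃_eq] at h
  obtain ⟨_, ⟨a, rfl⟩, _, ⟨b, rfl⟩, rfl⟩ := h
  exact ⟨a + -b, by rw [f₃_inv, f₃_mul]⟩

lemma tpp : TPP (sl2H₁ F) (sl2H₂ F) (sl2H₃ F) := by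
  intro q₁ hq₁ q₂ hq₂ q₃ hq₃ h
  obtain ⟨x, rfl⟩ := rq₁ hq₁
  obtain ⟨y, rfl⟩ := rq₂ hq₂
  obtain ⟨z, rfl⟩ := rq₃ hq₃
  have hm : ((f₁ x * f₂ y * f₃ z : SL2 F) : Matrix (Fin 2) (Fin 2) F)
      = ((1 : SL2 F) : Matrix (Fin 2) (Fin 2) F) := congrArg _ h
  rw [Matrix.SpecialLinearGroup.coe_mul, Matrix.SpecialLinearGroup.coe_mul,
    Matrix.SpecialLinearGroup.coe_one] at hm
  simp only [f₁, f₂, f₃, Matrix.mul_fin_two, Matrix.one_fin_two] at hm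
  have e00 := congrFun (congrFun hm 0) 0
  have e01 := congrFun (congrFun hm 0) 1
  have e10 := congrFun (congrFun hm 1) 0
  have e11 := congrFun (congrFun hm 1) 1
  norm_num [Matrix.of_apply] at e00 e01 e10 e11
  have hy : y = 0 := by linear_combination e10 - e11
  have hz : z = 0 := by linear_combination z * hy - e11
  have hx : x = 0 := by linear_combination e01 - hz - x * z * hy + x * hz
  subst hx; subst hy; subst hz
  exact ⟨f₁_zero, f₂_zero, f₃_zero⟩


def K₁sub (F : Type*) [Field F] : Subgroup (SL2 F) where
  carrier := Set.range f₁
  mul_mem' := by rintro _ _ ⟨a, rfl⟩ ⟨b, rfl⟩; exact ⟨a + b, (f₁_mul a b).symm⟩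
  one_mem' := ⟨0, f₁_zero⟩
  inv_mem' := by rintro _ ⟨a, rfl⟩; exact ⟨-a, (f₁_inv a).symm⟩

def K₂sub (F : Type*) [Field F] : Subgroup (SL2 F) where
  carrier := Set.range f₂
  mul_mem' := by rintro _ _ ⟨a, rfl⟩ ⟨b, rfl⟩; exact ⟨a + b, (f₂_mul a b).symm⟩
  one_mem' := ⟨0, f₂_zero⟩
  inv_mem' := by rintro _ ⟨a, rfl⟩; exact ⟨-a, (f₂_inv a).symm⟩

def K₃sub (F : Type*) [Field F] : Subgroup (SL2 F) where
  carrier := Set.range f₃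
  mul_mem' := by rintro _ _ ⟨a, rfl⟩ ⟨b, rfl⟩; exact ⟨a + b, (f₃_mul a b).symm⟩
  one_mem' := ⟨0, f₃_zero⟩
  inv_mem' := by rintro _ ⟨a, rfl⟩; exact ⟨-a, (f₃_inv a).symm⟩

lemma det_surjective :
    Function.Surjective (Matrix.GeneralLinearGroup.det : GL (Fin 2) F →* Fˣ) := by
  intro u
  refine ⟨⟨!![(u : F), 0; 0, 1], !![((u⁻¹ : Fˣ) : F), 0; 0, 1], ?_, ?_⟩, ?_⟩
  · ext i j
    fin_cases i <;> fin_cases j <;>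
      simp [Matrix.mul_fin_two, Matrix.one_fin_two]
  · ext i j
    fin_cases i <;> fin_cases j <;>
      simp [Matrix.mul_fin_two, Matrix.one_fin_two]
  · apply Units.ext
    simp [Matrix.GeneralLinearGroup.val_det_apply, Matrix.det_fin_two_of]

noncomputable def kerEquiv :
    SL2 F ≃ (MonoidHom.ker (Matrix.GeneralLinearGroup.det : GL (Fin 2) F →* Fˣ)) where
  toFun g := ⟨Matrix.SpecialLinearGroup.toGL g, by
    rw [MonoidHom.mem_ker]
    exact Matrix.SpecialLinearGroup.coeToGL_det g⟩
  invFun g := ⟨((g : GL (Fin 2) F) : Matrix (Fin 2) (Fin 2) F), by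
    have h := g.2
    rw [MonoidHom.mem_ker] at h
    have := congrArg Units.val h
    simpa [Matrix.GeneralLinearGroup.val_det_apply] using this⟩
  left_inv g := Subtype.ext rfl
  right_inv g := Subtype.ext (Units.ext rfl)

lemma card_SL2 [Fintype F] : Nat.card (SL2 F) = Fintype.card F ^ 3 - Fintype.card F := by
  set q := Fintype.card F with hq
  have hGL : Nat.card (GL (Fin 2) F) = (q ^ 2 - 1) * (q ^ 2 - q) := by
    rw [Matrix.card_GL_field, Fin.prod_univ_two]
    simp
    rfl
  have hker : Nat.card (MonoidHom.ker (Matrix.GeneralLinearGroup.det : GL (Fin 2) F →* Fˣ))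
      = Nat.card (SL2 F) := Nat.card_congr kerEquiv.symm
  have hquot : Nat.card (GL (Fin 2) F ⧸ MonoidHom.ker
      (Matrix.GeneralLinearGroup.det : GL (Fin 2) F →* Fˣ)) = q - 1 := by
    rw [Nat.card_congr (QuotientGroup.quotientKerEquivOfSurjective _ det_surjective).toEquiv]
    rw [Nat.card_units, Nat.card_eq_fintype_card, hq]
  have hsplit := Subgroup.card_eq_card_quotient_mul_card_subgroup
    (MonoidHom.ker (Matrix.GeneralLinearGroup.det : GL (Fin 2) F →* Fˣ))
  rw [hGL, hquot, hker] at hsplit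
  have h2 : 2 ≤ q := Fintype.one_lt_card
  have key : (q - 1) * (q ^ 3 - q) = (q ^ 2 - 1) * (q ^ 2 - q) := by
    have h1 : 1 ≤ q := by omega
    have h3 : q ≤ q ^ 3 := Nat.le_self_pow (by norm_num) q
    have h4 : q ≤ q ^ 2 := Nat.le_self_pow (by norm_num) q
    have h5 : 1 ≤ q ^ 2 := Nat.one_le_pow _ _ (by omega)
    zify [h1, h3, h4, h5]
    ring
  rw [← key] at hsplit
  exact (Nat.eq_of_mul_eq_mul_left (by omega) hsplit.symm)

end SL2TPP

open SL2TPP in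
theorem stmt_6 (F : Type*) [Field F] [Fintype F] (q : ℕ) (hq : Fintype.card F = q) :
    (∃ K₁ K₂ K₃ : Subgroup (Matrix.SpecialLinearGroup (Fin 2) F),
      (K₁ : Set (Matrix.SpecialLinearGroup (Fin 2) F)) = sl2H₁ F ∧
      (K₂ : Set (Matrix.SpecialLinearGroup (Fin 2) F)) = sl2H₂ F ∧
      (K₃ : Set (Matrix.SpecialLinearGroup (Fin 2) F)) = sl2H₃ F) ∧
    (sl2H₁ F).ncard = q ∧ (sl2H₂ F).ncard = q ∧ (sl2H₃ F).ncard = q ∧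
    TPP (sl2H₁ F) (sl2H₂ F) (sl2H₃ F) ∧
    Nat.card (Matrix.SpecialLinearGroup (Fin 2) F) = q ^ 3 - q ∧
    Realizes (Matrix.SpecialLinearGroup (Fin 2) F) q q q := by
  have hncard : Nat.card F = q := by rw [Nat.card_eq_fintype_card, hq]
  refine ⟨⟨K₁sub F, K₂sub F, K₃sub F, sl2H₁_eq.symm, sl2H₂_eq.symm, sl2H₃_eq.symm⟩,
    ?_, ?_, ?_, tpp, ?_, ?_⟩
  · rw [ncard_range_f₁, hncard]
  · rw [ncard_range_f₂, hncard]
  · rw [ncard_range_f₃, hncard]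
  · rw [card_SL2, hq]
  · exact ⟨sl2H₁ F, sl2H₂ F, sl2H₃ F, Set.toFinite _, Set.toFinite _, Set.toFinite _,
      by rw [ncard_range_f₁, hncard], by rw [ncard_range_f₂, hncard],
      by rw [ncard_range_f₃, hncard], tpp⟩
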